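/- Let H be a complex Hilbert space, Ω ∈ H a unit vector, and ψ the vector state on B(H) given by ψ(X) = ⟨Ω, X Ω⟩. Let I be an index set, and for each ordered pair (a,b) ∈ I × I let α_{ab} be a *-algebra automorphism of B(H) such that α_{ab} ∘ α_{bc} = α_{ac} for all a, b, c ∈ I, and let V_{ab} be a unitary operator such that ψ(α_{ab}⁻¹(X)) = ψ(V_{ab}⁻¹ X V_{ab}) for all X ∈ B(H). Define W_{abc} := V_{ac}⁻¹ α_{ab}(V_{bc}) V_{ab} and h_{abc} := ψ(W_{abc}). Then: (i) W_{abc} is a unitary preserving ψ, i.e. ψ(W_{abc} X W_{abc}*) = ψ(X) for all X; (ii) |h_{abc}| = 1; and (iii) the cocycle identity h_{acd} · h_{abc} = h_{abd} · h_{bcd} holds for all a, b, c, d ∈ I. -/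

import Mathlib

set_option synthInstance.maxHeartbeats 400000 in
/-- Let `ψ(X) = ⟨Ω, X Ω⟩` be the vector state of a unit vector `Ω` in a
complex Hilbert space, let `α_{ab}` be *-automorphisms of `B(H)` with
`α_{ab} ∘ α_{bc} = α_{ac}` and let `V_{ab}` be unitaries implementing
`ψ ∘ α_{ab}⁻¹ = ψ ∘ Ad_{V_{ab}⁻¹}`.  With `W_{abc} := V_{ac}⁻¹ α_{ab}(V_{bc}) V_{ab}`
and `h_{abc} := ψ(W_{abc})`: (i) `W_{abc}` is a unitary preserving `ψ`;
(ii) `|h_{abc}| = 1`; (iii) `h_{acd} h_{abc} = h_{abd} h_{bcd}`. -/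
theorem cech_two_cocycle_from_implementing_unitaries
    {H : Type*} [NormedAddCommGroup H] [InnerProductSpace ℂ H] [CompleteSpace H]
    {I : Type*} (Ω : H) (hΩ : ‖Ω‖ = 1)
    (ψ : (H →L[ℂ] H) → ℂ) (hψ : ∀ X, ψ X = inner ℂ Ω (X Ω))
    (α : I → I → ((H →L[ℂ] H) ≃⋆ₐ[ℂ] (H →L[ℂ] H)))
    (hα : ∀ a b c X, α a b (α b c X) = α a c X)
    (V : I → I → (H →L[ℂ] H))
    (hVu : ∀ a b, V a b ∈ unitary (H →L[ℂ] H))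
    (hV : ∀ a b X, ψ ((α a b).symm X) = ψ (star (V a b) * X * V a b)) :
    ∀ a b c d : I,
      (star (V a c) * α a b (V b c) * V a b) ∈ unitary (H →L[ℂ] H) ∧
      (∀ X, ψ ((star (V a c) * α a b (V b c) * V a b) * X *
          star (star (V a c) * α a b (V b c) * V a b)) = ψ X) ∧
      ‖ψ (star (V a c) * α a b (V b c) * V a b)‖ = 1 ∧
      ψ (star (V a d) * α a c (V c d) * V a c) * ψ (star (V a c) * α a b (V b c) * V a b)
        = ψ (star (V a d) * α a b (V b d) * V a b) *
          ψ (star (V b d) * α b c (V c d) * V b c) := by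
  -- `eig` : a `ψ`-preserving unitary has `Ω` as eigenvector with eigenvalue `ψ W`
  have hΩ1 : (inner ℂ Ω Ω : ℂ) = 1 := by
    rw [inner_self_eq_norm_sq_to_K, hΩ]; norm_num
  have heig : ∀ W : H →L[ℂ] H, W ∈ unitary (H →L[ℂ] H) →
      (∀ X, ψ (W * X * star W) = ψ X) → W Ω = ψ W • Ω ∧ ‖ψ W‖ = 1 := by
    intro W hWu hpres
    set h : ℂ := ψ W with hh
    have hWΩ : (inner ℂ Ω (W Ω) : ℂ) = h := (hψ W).symm
    have hWΩ' : (inner ℂ (W Ω) Ω : ℂ) = starRingEnd ℂ h := by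
      rw [← inner_conj_symm, hWΩ]
    have hsWΩ : (inner ℂ Ω ((star W) Ω) : ℂ) = starRingEnd ℂ h := by
      rw [ContinuousLinearMap.star_eq_adjoint, ContinuousLinearMap.adjoint_inner_right,
        ← inner_conj_symm, hWΩ]
    set P : H →L[ℂ] H := (innerSL ℂ Ω).smulRight Ω with hP
    have hPapp : ∀ y, P y = (inner ℂ Ω y : ℂ) • Ω := fun y => by
      simp [hP]
    have h1 : ψ (W * P * star W) = (starRingEnd ℂ h) * h := by
      rw [hψ]
      simp only [ContinuousLinearMap.mul_apply, hPapp, map_smul, inner_smul_right, hsWΩ, hWΩ]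
    have h2 : ψ P = 1 := by
      rw [hψ, hPapp, inner_smul_right, hΩ1, mul_one]
    have hch : (starRingEnd ℂ h) * h = 1 := by rw [← h1, hpres, h2]
    have hnorm : ‖h‖ = 1 := by
      have := congrArg (fun z : ℂ => ‖z‖) hch
      simp only [norm_mul, norm_one] at this
      rw [RCLike.norm_conj] at this
      nlinarith [norm_nonneg h, this]
    have hWW : (inner ℂ (W Ω) (W Ω) : ℂ) = 1 := by
      rw [← ContinuousLinearMap.adjoint_inner_right, ← ContinuousLinearMap.star_eq_adjoint]
      have heq : (star W) (W Ω) = Ω := by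
        have h1 := hWu.1
        calc (star W) (W Ω) = (star W * W) Ω := rfl
          _ = Ω := by rw [h1]; rfl
      rw [heq, hΩ1]
    have hhc : h * (starRingEnd ℂ h) = 1 := by rw [mul_comm]; exact hch
    have heigW : W Ω = h • Ω := by
      have hz : (inner ℂ (W Ω - h • Ω) (W Ω - h • Ω) : ℂ) = 0 := by
        simp only [inner_sub_left, inner_sub_right, inner_smul_left, inner_smul_right,
          hWW, hΩ1, hWΩ, hWΩ', mul_one]
        linear_combination -hch
      rw [← sub_eq_zero]
      exact inner_self_eq_zero.mp hz
    exact ⟨heigW, hnorm⟩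
  -- multiplicativity of `ψ` against eigenvector elements
  have hmul : ∀ W₁ W₂ : H →L[ℂ] H, W₂ Ω = ψ W₂ • Ω → ψ (W₁ * W₂) = ψ W₂ * ψ W₁ := by
    intro W₁ W₂ he
    rw [hψ (W₁ * W₂), hψ W₁]
    simp only [ContinuousLinearMap.mul_apply, he, map_smul, inner_smul_right]
  -- unitary algebra facts
  have hsV : ∀ a b : I, star (V a b) * V a b = 1 := fun a b => (hVu a b).1
  have hVs : ∀ a b : I, V a b * star (V a b) = 1 := fun a b => (hVu a b).2
  have hc1 : ∀ (a b : I) (x : H →L[ℂ] H), star (V a b) * (V a b * x) = x := fun a b x => by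
    rw [← mul_assoc, hsV, one_mul]
  have hc2 : ∀ (a b : I) (x : H →L[ℂ] H), V a b * (star (V a b) * x) = x := fun a b x => by
    rw [← mul_assoc, hVs, one_mul]
  have hsymm : ∀ (a b c : I) (X : H →L[ℂ] H),
      (α a c).symm X = (α b c).symm ((α a b).symm X) := by
    intro a b c X
    have h1 : α a c ((α b c).symm ((α a b).symm X)) = X := by
      rw [← hα a b c]; simp
    conv_lhs => rw [← h1]
    rw [StarAlgEquiv.symm_apply_apply]
  have hαVs : ∀ a b c : I, α a b (V b c) * star (α a b (V b c)) = 1 := by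
    intro a b c
    rw [← map_star, ← map_mul, hVs, map_one]
  have hαsV : ∀ a b c : I, star (α a b (V b c)) * α a b (V b c) = 1 := by
    intro a b c
    rw [← map_star, ← map_mul, hsV, map_one]
  -- (i) unitarity of W_{abc}
  have hWu : ∀ a b c : I, (star (V a c) * α a b (V b c) * V a b) ∈ unitary (H →L[ℂ] H) := by
    intro a b c
    refine mul_mem (mul_mem (Unitary.star_mem (hVu a c)) ?_) (hVu a b)
    rw [Unitary.mem_iff]
    exact ⟨hαsV a b c, hαVs a b c⟩
  -- (i) ψ-preservation of W_{abc}
  have hWpres : ∀ (a b c : I) (X : H →L[ℂ] H),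
      ψ ((star (V a c) * α a b (V b c) * V a b) * X *
        star (star (V a c) * α a b (V b c) * V a b)) = ψ X := by
    intro a b c X
    have e1 : (star (V a c) * α a b (V b c) * V a b) * X *
        star (star (V a c) * α a b (V b c) * V a b)
        = star (V a c) * (α a b (V b c) * (V a b * X * star (V a b)) *
            star (α a b (V b c))) * V a c := by
      simp only [star_mul, star_star, mul_assoc]
    rw [e1, ← hV a c, hsymm a b c]
    have e2 : (α a b).symm (α a b (V b c) * (V a b * X * star (V a b)) * star (α a b (V b c)))
        = V b c * ((α a b).symm (V a b * X * star (V a b))) * star (V b c) := by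
      simp only [map_mul, map_star, StarAlgEquiv.symm_apply_apply]
    rw [e2, hV b c]
    have e3 : star (V b c) * (V b c * (α a b).symm (V a b * X * star (V a b)) * star (V b c)) *
        V b c = (α a b).symm (V a b * X * star (V a b)) := by
      simp only [mul_assoc, hc1, hc2]
      rw [hsV, mul_one]
    rw [e3, hV a b]
    have e4 : star (V a b) * (V a b * X * star (V a b)) * V a b = X := by
      simp only [mul_assoc, hc1]
      rw [hsV, mul_one]
    rw [e4]
  -- conjugation: star Vab * αab M * Vab is ψ-preserving whenever M is
  have hL1 : ∀ (a b : I) (M : H →L[ℂ] H), (∀ X, ψ (M * X * star M) = ψ X) →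
      ∀ X, ψ ((star (V a b) * α a b M * V a b) * X * star (star (V a b) * α a b M * V a b))
        = ψ X := by
    intro a b M hM X
    have e1 : (star (V a b) * α a b M * V a b) * X * star (star (V a b) * α a b M * V a b)
        = star (V a b) * (α a b M * (V a b * X * star (V a b)) * star (α a b M)) * V a b := by
      simp only [star_mul, star_star, mul_assoc]
    rw [e1, ← hV a b]
    have e2 : (α a b).symm (α a b M * (V a b * X * star (V a b)) * star (α a b M))
        = M * ((α a b).symm (V a b * X * star (V a b))) * star M := by
      simp only [map_mul, map_star, StarAlgEquiv.symm_apply_apply]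
    rw [e2, hM, hV a b]
    have e4 : star (V a b) * (V a b * X * star (V a b)) * V a b = X := by
      simp only [mul_assoc, hc1]
      rw [hsV, mul_one]
    rw [e4]
  have hUval : ∀ (a b : I) (M : H →L[ℂ] H), ψ (star (V a b) * α a b M * V a b) = ψ M := by
    intro a b M
    have h1 := hV a b (α a b M)
    rw [StarAlgEquiv.symm_apply_apply] at h1
    exact h1.symm
  -- the algebraic cocycle identity on the level of operators
  have hident : ∀ a b c d : I,
      (star (V a d) * α a c (V c d) * V a c) * (star (V a c) * α a b (V b c) * V a b)
      = (star (V a d) * α a b (V b d) * V a b) *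
        (star (V a b) * α a b (star (V b d) * α b c (V c d) * V b c) * V a b) := by
    intro a b c d
    have hbd : ∀ x : H →L[ℂ] H, α a b (V b d) * (star (α a b (V b d)) * x) = x := fun x => by
      rw [← mul_assoc, hαVs, one_mul]
    simp only [map_mul, map_star, hα, mul_assoc, hc1, hc2, hbd]
  -- assemble
  intro a b c d
  refine ⟨hWu a b c, hWpres a b c, (heig _ (hWu a b c) (hWpres a b c)).2, ?_⟩
  -- (iii)
  have habc := (heig _ (hWu a b c) (hWpres a b c)).1
  -- U := star Vab * αab (W_{bcd}) * Vab
  set M : H →L[ℂ] H := star (V b d) * α b c (V c d) * V b c with hM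
  have hMu : M ∈ unitary (H →L[ℂ] H) := hWu b c d
  set U : H →L[ℂ] H := star (V a b) * α a b M * V a b with hU
  have hUu : U ∈ unitary (H →L[ℂ] H) := by
    refine mul_mem (mul_mem (Unitary.star_mem (hVu a b)) ?_) (hVu a b)
    rw [Unitary.mem_iff]
    constructor
    · rw [← map_star, ← map_mul, (Unitary.mem_iff.mp hMu).1, map_one]
    · rw [← map_star, ← map_mul, (Unitary.mem_iff.mp hMu).2, map_one]
  have hUpres := hL1 a b M (hWpres b c d)
  have hUeig := (heig U hUu hUpres).1
  calc ψ (star (V a d) * α a c (V c d) * V a c) * ψ (star (V a c) * α a b (V b c) * V a b)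
      = ψ (star (V a c) * α a b (V b c) * V a b) * ψ (star (V a d) * α a c (V c d) * V a c) :=
        mul_comm _ _
    _ = ψ ((star (V a d) * α a c (V c d) * V a c) * (star (V a c) * α a b (V b c) * V a b)) :=
        (hmul _ _ habc).symm
    _ = ψ ((star (V a d) * α a b (V b d) * V a b) * U) := by rw [hident a b c d]
    _ = ψ U * ψ (star (V a d) * α a b (V b d) * V a b) := hmul _ _ hUeig
    _ = ψ (star (V a d) * α a b (V b d) * V a b) * ψ (star (V b d) * α b c (V c d) * V b c) := by
        rw [hU, hUval a b M, hM, mul_comm]
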